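/- arXiv:1712.03658 — 5 statements merged into one kernel-verified Lean document; each statement's English description precedes it below -/
import Mathlib

section
/- Let A be a 3×3 matrix and K the corresponding Hall tensor with k_{ijk} = Σ_l ε_{ijl} a_{lk}. Then for any orthogonal 3×3 matrix Q, the transformed tensor (⟨Q⟩K)_{ijk} := Σ_{p,q,r} q_{ip} q_{jq} q_{kr} k_{pqr} equals the Hall tensor associated to the matrix det(Q) · Q A Qᵀ. -/
open Matrix

/-- The Levi-Civita symbol on `Fin 3`. -/
noncomputable def lc (i j k : Fin 3) : ℝ :=
  ((((j.val : ℤ) - i.val) * ((k.val : ℤ) - j.val) * ((k.val : ℤ) - i.val)) / 2 : ℤ)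

/-- The Hall tensor `εA` associated to a 3×3 matrix: `k_{ijk} = Σ_l ε_{ijl} a_{lk}`. -/
noncomputable def toHall (A : Matrix (Fin 3) (Fin 3) ℝ) : Fin 3 → Fin 3 → Fin 3 → ℝ :=
  fun i j k => ∑ l, lc i j l * A l k

/-- The matrix `εK` associated to a third order tensor: `(εK)_{ij} = Σ_{k,l} ε_{kli} k_{klj}`. -/
noncomputable def toMat (K : Fin 3 → Fin 3 → Fin 3 → ℝ) : Matrix (Fin 3) (Fin 3) ℝ :=
  Matrix.of fun i j => ∑ k, ∑ l, lc k l i * K k l j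

/-- Orthogonal transformation of a third order tensor. -/
noncomputable def rot (Q : Matrix (Fin 3) (Fin 3) ℝ) (K : Fin 3 → Fin 3 → Fin 3 → ℝ) :
    Fin 3 → Fin 3 → Fin 3 → ℝ :=
  fun i j k => ∑ p, ∑ q, ∑ r, Q i p * Q j q * Q k r * K p q r

/-- Symmetric part of a matrix. -/
noncomputable def symmPart (A : Matrix (Fin 3) (Fin 3) ℝ) : Matrix (Fin 3) (Fin 3) ℝ :=
  (1/2 : ℝ) • (A + Aᵀ)

/-- Skew-symmetric part of a matrix. -/
noncomputable def skewPart (A : Matrix (Fin 3) (Fin 3) ℝ) : Matrix (Fin 3) (Fin 3) ℝ :=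
  (1/2 : ℝ) • (A - Aᵀ)

set_option maxHeartbeats 1000000 in
/-- `ε_{pqr} q_{ip} q_{jq} q_{kr} = det Q ε_{ijk}`. -/
lemma key (Q : Matrix (Fin 3) (Fin 3) ℝ) (i j k : Fin 3) :
    ∑ p, ∑ q, ∑ r, Q i p * Q j q * Q k r * lc p q r = Q.det * lc i j k := by
  fin_cases i <;> fin_cases j <;> fin_cases k <;>
    · simp only [Fin.sum_univ_three, lc, Matrix.det_fin_three,
        show (⟨2, by omega⟩ : Fin 3) = 2 from rfl]
      norm_num
      try ring

set_option maxHeartbeats 1000000 in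
lemma key2 (Q : Matrix (Fin 3) (Fin 3) ℝ) (hQ : Qᵀ * Q = 1) (i j l : Fin 3) :
    ∑ p, ∑ q, Q i p * Q j q * lc p q l = Q.det * ∑ m, lc i j m * Q m l := by
  have hd00 : Q 0 0 * Q 0 0 + Q 1 0 * Q 1 0 + Q 2 0 * Q 2 0 = 1 := by
    have := congrFun (congrFun hQ 0) 0
    simpa [Matrix.mul_apply, Fin.sum_univ_three, Matrix.one_apply] using this
  have hd01 : Q 0 0 * Q 0 1 + Q 1 0 * Q 1 1 + Q 2 0 * Q 2 1 = 0 := by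
    have := congrFun (congrFun hQ 0) 1
    simpa [Matrix.mul_apply, Fin.sum_univ_three, Matrix.one_apply] using this
  have hd02 : Q 0 0 * Q 0 2 + Q 1 0 * Q 1 2 + Q 2 0 * Q 2 2 = 0 := by
    have := congrFun (congrFun hQ 0) 2
    simpa [Matrix.mul_apply, Fin.sum_univ_three, Matrix.one_apply] using this
  have hd10 : Q 0 1 * Q 0 0 + Q 1 1 * Q 1 0 + Q 2 1 * Q 2 0 = 0 := by
    have := congrFun (congrFun hQ 1) 0
    simpa [Matrix.mul_apply, Fin.sum_univ_three, Matrix.one_apply] using this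
  have hd11 : Q 0 1 * Q 0 1 + Q 1 1 * Q 1 1 + Q 2 1 * Q 2 1 = 1 := by
    have := congrFun (congrFun hQ 1) 1
    simpa [Matrix.mul_apply, Fin.sum_univ_three, Matrix.one_apply] using this
  have hd12 : Q 0 1 * Q 0 2 + Q 1 1 * Q 1 2 + Q 2 1 * Q 2 2 = 0 := by
    have := congrFun (congrFun hQ 1) 2
    simpa [Matrix.mul_apply, Fin.sum_univ_three, Matrix.one_apply] using this
  have hd20 : Q 0 2 * Q 0 0 + Q 1 2 * Q 1 0 + Q 2 2 * Q 2 0 = 0 := by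
    have := congrFun (congrFun hQ 2) 0
    simpa [Matrix.mul_apply, Fin.sum_univ_three, Matrix.one_apply] using this
  have hd21 : Q 0 2 * Q 0 1 + Q 1 2 * Q 1 1 + Q 2 2 * Q 2 1 = 0 := by
    have := congrFun (congrFun hQ 2) 1
    simpa [Matrix.mul_apply, Fin.sum_univ_three, Matrix.one_apply] using this
  have hd22 : Q 0 2 * Q 0 2 + Q 1 2 * Q 1 2 + Q 2 2 * Q 2 2 = 1 := by
    have := congrFun (congrFun hQ 2) 2
    simpa [Matrix.mul_apply, Fin.sum_univ_three, Matrix.one_apply] using this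
  have K0 := key Q i j 0
  have K1 := key Q i j 1
  have K2 := key Q i j 2
  simp only [Fin.sum_univ_three] at K0 K1 K2 ⊢
  fin_cases l <;>
    simp only [show (⟨0, by omega⟩ : Fin 3) = 0 from rfl,
      show (⟨1, by omega⟩ : Fin 3) = 1 from rfl, show (⟨2, by omega⟩ : Fin 3) = 2 from rfl]
  · linear_combination (Q 0 0 * K0 + Q 1 0 * K1 + Q 2 0 * K2) - (Q i 0 * Q j 0 * lc 0 0 0 + Q i 0 * Q j 1 * lc 0 1 0 + Q i 0 * Q j 2 * lc 0 2 0 + Q i 1 * Q j 0 * lc 1 0 0 + Q i 1 * Q j 1 * lc 1 1 0 + Q i 1 * Q j 2 * lc 1 2 0 + Q i 2 * Q j 0 * lc 2 0 0 + Q i 2 * Q j 1 * lc 2 1 0 + Q i 2 * Q j 2 * lc 2 2 0) * hd00 - (Q i 0 * Q j 0 * lc 0 0 1 + Q i 0 * Q j 1 * lc 0 1 1 + Q i 0 * Q j 2 * lc 0 2 1 + Q i 1 * Q j 0 * lc 1 0 1 + Q i 1 * Q j 1 * lc 1 1 1 + Q i 1 * Q j 2 * lc 1 2 1 + Q i 2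 * Q j 0 * lc 2 0 1 + Q i 2 * Q j 1 * lc 2 1 1 + Q i 2 * Q j 2 * lc 2 2 1) * hd01 - (Q i 0 * Q j 0 * lc 0 0 2 + Q i 0 * Q j 1 * lc 0 1 2 + Q i 0 * Q j 2 * lc 0 2 2 + Q i 1 * Q j 0 * lc 1 0 2 + Q i 1 * Q j 1 * lc 1 1 2 + Q i 1 * Q j 2 * lc 1 2 2 + Q i 2 * Q j 0 * lc 2 0 2 + Q i 2 * Q j 1 * lc 2 1 2 + Q i 2 * Q j 2 * lc 2 2 2) * hd02
  · linear_combination (Q 0 1 * K0 + Q 1 1 * K1 + Q 2 1 * K2) - (Q i 0 * Q j 0 * lc 0 0 0 + Q i 0 * Q j 1 * lc 0 1 0 + Q i 0 * Q j 2 * lc 0 2 0 + Q i 1 * Q j 0 * lc 1 0 0 + Q i 1 * Q j 1 * lc 1 1 0 + Q i 1 * Q j 2 * lc 1 2 0 + Q i 2 * Q j 0 * lc 2 0 0 + Q i 2 * Q j 1 * lc 2 1 0 + Q i 2 * Q j 2 * lc 2 2 0) * hd10 - (Q i 0 * Q j 0 * lc 0 0 1 + Q i 0 * Q j 1 * lc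 0 1 1 + Q i 0 * Q j 2 * lc 0 2 1 + Q i 1 * Q j 0 * lc 1 0 1 + Q i 1 * Q j 1 * lc 1 1 1 + Q i 1 * Q j 2 * lc 1 2 1 + Q i 2 * Q j 0 * lc 2 0 1 + Q i 2 * Q j 1 * lc 2 1 1 + Q i 2 * Q j 2 * lc 2 2 1) * hd11 - (Q i 0 * Q j 0 * lc 0 0 2 + Q i 0 * Q j 1 * lc 0 1 2 + Q i 0 * Q j 2 * lc 0 2 2 + Q i 1 * Q j 0 * lc 1 0 2 + Q i 1 * Q j 1 * lc 1 1 2 + Q i 1 * Q j 2 * lc 1 2 2 + Q i 2 * Q j 0 * lc 2 0 2 + Q i 2 * Q j 1 * lc 2 1 2 + Q i 2 * Q j 2 * lc 2 2 2) * hd12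
  · linear_combination (Q 0 2 * K0 + Q 1 2 * K1 + Q 2 2 * K2) - (Q i 0 * Q j 0 * lc 0 0 0 + Q i 0 * Q j 1 * lc 0 1 0 + Q i 0 * Q j 2 * lc 0 2 0 + Q i 1 * Q j 0 * lc 1 0 0 + Q i 1 * Q j 1 * lc 1 1 0 + Q i 1 * Q j 2 * lc 1 2 0 + Q i 2 * Q j 0 * lc 2 0 0 + Q i 2 * Q j 1 * lc 2 1 0 + Q i 2 * Q j 2 * lc 2 2 0) * hd20 - (Q i 0 * Q j 0 * lc 0 0 1 + Q i 0 * Q j 1 * lc 0 1 1 + Q i 0 * Q j 2 * lc 0 2 1 + Q i 1 * Q j 0 * lc 1 0 1 + Q i 1 * Q j 1 * lc 1 1 1 + Q i 1 * Q j 2 * lc 1 2 1 + Q i 2 * Q j 0 * lc 2 0 1 + Q i 2 * Q j 1 * lc 2 1 1 + Q i 2 * Q j 2 * lc 2 2 1) * hd21 - (Q i 0 * Q j 0 * lc 0 0 2 + Q i 0 * Q j 1 * lc 0 1 2 + Q i 0 * Q j 2 * lc 0 2 2 + Q i 1 * Q j 0 * lc 1 0 2 + Q i 1 * Q j 1 *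 lc 1 1 2 + Q i 1 * Q j 2 * lc 1 2 2 + Q i 2 * Q j 0 * lc 2 0 2 + Q i 2 * Q j 1 * lc 2 1 2 + Q i 2 * Q j 2 * lc 2 2 2) * hd22

set_option maxHeartbeats 1000000 in
/-- Rotating the Hall tensor of `A` gives the Hall tensor of `det Q • Q A Qᵀ`. -/
theorem rot_toHall (A Q : Matrix (Fin 3) (Fin 3) ℝ) (hQ : Qᵀ * Q = 1) :
    rot Q (toHall A) = toHall (Q.det • (Q * A * Qᵀ)) := by
  funext i j k
  have H0 := key2 Q hQ i j 0
  have H1 := key2 Q hQ i j 1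
  have H2 := key2 Q hQ i j 2
  simp only [Fin.sum_univ_three] at H0 H1 H2
  simp only [rot, toHall, Matrix.smul_apply, smul_eq_mul, Matrix.mul_apply,
    Matrix.transpose_apply, Fin.sum_univ_three]
  linear_combination (A 0 0 * Q k 0 + A 0 1 * Q k 1 + A 0 2 * Q k 2) * H0 + (A 1 0 * Q k 0 + A 1 1 * Q k 1 + A 1 2 * Q k 2) * H1 + (A 2 0 * Q k 0 + A 2 1 * Q k 1 + A 2 2 * Q k 2) * H2
end

section
/- Let g be a function on 3×3 matrices satisfying g(Q A Qᵀ) = g(A) for all orthogonal Q, and suppose g is even, i.e., g(-A) = g(A) for all A. Then the function f defined on Hall tensors by f(K) := g((1/2)εK) satisfies f(⟨Q⟩K) = f(K) for all orthogonal Q; i.e., f is an isotropic invariant of the Hall tensor. -/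
open Matrix

set_option maxHeartbeats 1000000 in
/-- Universal cofactor identity: `Σ_{k,l} ε_{kli} Q_{kp} Q_{lq} = Σ_m ε_{pqm} adj(Q)_{mi}`. -/
lemma eps_adj (Q : Matrix (Fin 3) (Fin 3) ℝ) (i p q : Fin 3) :
    (∑ k, ∑ l, lc k l i * Q k p * Q l q) = ∑ m, lc p q m * Q.adjugate m i := by
  have h2 : (⟨2, by norm_num⟩ : Fin 3) = 2 := rfl
  fin_cases i <;> fin_cases p <;> fin_cases q <;>
    · simp only [Matrix.adjugate_fin_three, Fin.sum_univ_three, Matrix.of_apply,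
        Matrix.cons_val', Matrix.cons_val_zero, Matrix.cons_val_one, Matrix.head_cons,
        Matrix.empty_val', Matrix.cons_val_fin_one, Matrix.head_fin_const,
        Matrix.cons_val_two, Matrix.tail_cons, h2]
      norm_num [lc]
      ring

set_option maxHeartbeats 2000000 in
lemma toMat_rot (Q : Matrix (Fin 3) (Fin 3) ℝ) (hQ : Qᵀ * Q = 1)
    (K : Fin 3 → Fin 3 → Fin 3 → ℝ) :
    toMat (rot Q K) = Q.det • (Q * toMat K * Qᵀ) := by
  have hadj : Q.adjugate = Q.det • Qᵀ := by
    calc Q.adjugate = (Qᵀ * Q) * Q.adjugate := by rw [hQ, one_mul]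
    _ = Qᵀ * (Q * Q.adjugate) := by rw [Matrix.mul_assoc]
    _ = Qᵀ * (Q.det • 1) := by rw [Matrix.mul_adjugate]
    _ = Q.det • Qᵀ := by rw [Matrix.mul_smul, Matrix.mul_one]
  have hkey : ∀ i p q : Fin 3,
      (∑ k, ∑ l, lc k l i * Q k p * Q l q) = ∑ m, lc p q m * (Q.det * Q i m) := by
    intro i p q
    rw [eps_adj]
    congr 1; funext m
    rw [hadj]; simp [Matrix.transpose_apply]
  have e1 : ∀ i j : Fin 3, toMat (rot Q K) i j =
      ∑ p, ∑ q, (∑ k, ∑ l, lc k l i * Q k p * Q l q) * (∑ r, Q j r * K p q r) := by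
    intro i j
    simp only [toMat, rot, Matrix.of_apply, Fin.sum_univ_three]
    ring
  ext i j
  rw [e1]
  simp only [hkey]
  simp only [Matrix.smul_apply, Matrix.mul_apply, toMat, Matrix.of_apply,
    Matrix.transpose_apply, Fin.sum_univ_three, smul_eq_mul]
  ring

/-- An even orthogonally-invariant function of `(1/2)εK` is an isotropic
invariant of the Hall tensor `K`. -/
theorem isotropic_of_even_invariant
    (g : Matrix (Fin 3) (Fin 3) ℝ → ℝ)
    (hg : ∀ (Q A : Matrix (Fin 3) (Fin 3) ℝ), Qᵀ * Q = 1 → g (Q * A * Qᵀ) = g A)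
    (heven : ∀ A, g (-A) = g A)
    (f : (Fin 3 → Fin 3 → Fin 3 → ℝ) → ℝ)
    (hf : ∀ K, f K = g ((1/2 : ℝ) • toMat K)) :
    ∀ (Q : Matrix (Fin 3) (Fin 3) ℝ), Qᵀ * Q = 1 →
      ∀ K : Fin 3 → Fin 3 → Fin 3 → ℝ, (∀ i j k, K i j k = - K j i k) →
        f (rot Q K) = f K := by
  intro Q hQ K _
  have hdet : Q.det = 1 ∨ Q.det = -1 := by
    have h := congrArg Matrix.det hQ
    rw [Matrix.det_mul, Matrix.det_transpose, Matrix.det_one] at h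
    exact mul_self_eq_one_iff.mp h
  have hmul : (1/2 : ℝ) • (Q * toMat K * Qᵀ) = Q * ((1/2 : ℝ) • toMat K) * Qᵀ := by
    rw [Matrix.mul_smul, Matrix.smul_mul]
  rw [hf, hf, toMat_rot Q hQ K]
  rcases hdet with h | h
  · rw [h, one_smul, hmul, hg Q _ hQ]
  · rw [h]
    have : (1/2 : ℝ) • ((-1 : ℝ) • (Q * toMat K * Qᵀ)) =
        -(Q * ((1/2 : ℝ) • toMat K) * Qᵀ) := by
      rw [smul_smul, ← hmul, ← neg_smul]
      norm_num
    rw [this, heven, hg Q _ hQ]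
end

section
/- Let g be a function on 3×3 matrices satisfying g(Q A Qᵀ) = g(A) for all orthogonal Q, and suppose g is odd, i.e., g(-A) = -g(A) for all A. Then the function f defined on Hall tensors by f(K) := g((1/2)εK) satisfies f(⟨Q⟩K) = f(K) for all orthogonal Q with det Q = 1; i.e., f is a hemitropic invariant of the Hall tensor. -/
open Matrix

lemma lc000 : lc 0 0 0 = 0 := by norm_num [lc]
lemma lc001 : lc 0 0 1 = 0 := by norm_num [lc]
lemma lc002 : lc 0 0 2 = 0 := by norm_num [lc]
lemma lc010 : lc 0 1 0 = 0 := by norm_num [lc]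
lemma lc011 : lc 0 1 1 = 0 := by norm_num [lc]
lemma lc012 : lc 0 1 2 = 1 := by norm_num [lc]
lemma lc020 : lc 0 2 0 = 0 := by norm_num [lc]
lemma lc021 : lc 0 2 1 = -1 := by norm_num [lc]
lemma lc022 : lc 0 2 2 = 0 := by norm_num [lc]
lemma lc100 : lc 1 0 0 = 0 := by norm_num [lc]
lemma lc101 : lc 1 0 1 = 0 := by norm_num [lc]
lemma lc102 : lc 1 0 2 = -1 := by norm_num [lc]
lemma lc110 : lc 1 1 0 = 0 := by norm_num [lc]
lemma lc111 : lc 1 1 1 = 0 := by norm_num [lc]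
lemma lc112 : lc 1 1 2 = 0 := by norm_num [lc]
lemma lc120 : lc 1 2 0 = 1 := by norm_num [lc]
lemma lc121 : lc 1 2 1 = 0 := by norm_num [lc]
lemma lc122 : lc 1 2 2 = 0 := by norm_num [lc]
lemma lc200 : lc 2 0 0 = 0 := by norm_num [lc]
lemma lc201 : lc 2 0 1 = 1 := by norm_num [lc]
lemma lc202 : lc 2 0 2 = 0 := by norm_num [lc]
lemma lc210 : lc 2 1 0 = -1 := by norm_num [lc]
lemma lc211 : lc 2 1 1 = 0 := by norm_num [lc]
lemma lc212 : lc 2 1 2 = 0 := by norm_num [lc]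
lemma lc220 : lc 2 2 0 = 0 := by norm_num [lc]
lemma lc221 : lc 2 2 1 = 0 := by norm_num [lc]
lemma lc222 : lc 2 2 2 = 0 := by norm_num [lc]

attribute [local simp] lc000 lc001 lc002 lc010 lc011 lc012 lc020 lc021 lc022 lc100 lc101 lc102 lc110 lc111 lc112 lc120 lc121 lc122 lc200 lc201 lc202 lc210 lc211 lc212 lc220 lc221 lc222


lemma adj_eq (Q : Matrix (Fin 3) (Fin 3) ℝ) (hQ : Qᵀ * Q = 1) (hdet : Q.det = 1) :
    Q.adjugate = Qᵀ := by
  have h2 : Q * Qᵀ = 1 := mul_eq_one_comm.mp hQ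
  calc Q.adjugate = Q.adjugate * (Q * Qᵀ) := by rw [h2, mul_one]
    _ = (Q.det • 1) * Qᵀ := by rw [← mul_assoc, adjugate_mul]
    _ = Qᵀ := by rw [hdet]; simp

set_option maxHeartbeats 1000000 in
lemma cross' (Q : Matrix (Fin 3) (Fin 3) ℝ) (hadj : Q.adjugate = Qᵀ) (p q i : Fin 3) :
    ∑ k, ∑ l, lc k l i * (Q k p * Q l q) = ∑ m, lc p q m * Q i m := by
  have hh : ∀ m n : Fin 3, Q.adjugate m n = Q n m := fun m n => by rw [hadj, transpose_apply]
  have h00 : (Q 1 1 * Q 2 2 - Q 1 2 * Q 2 1) = Q 0 0 := by simpa [adjugate_fin_three] using hh 0 0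
  have h01 : (-(Q 0 1 * Q 2 2) + Q 0 2 * Q 2 1) = Q 1 0 := by simpa [adjugate_fin_three] using hh 0 1
  have h02 : (Q 0 1 * Q 1 2 - Q 0 2 * Q 1 1) = Q 2 0 := by simpa [adjugate_fin_three] using hh 0 2
  have h10 : (-(Q 1 0 * Q 2 2) + Q 1 2 * Q 2 0) = Q 0 1 := by simpa [adjugate_fin_three] using hh 1 0
  have h11 : (Q 0 0 * Q 2 2 - Q 0 2 * Q 2 0) = Q 1 1 := by simpa [adjugate_fin_three] using hh 1 1
  have h12 : (-(Q 0 0 * Q 1 2) + Q 0 2 * Q 1 0) = Q 2 1 := by simpa [adjugate_fin_three] using hh 1 2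
  have h20 : (Q 1 0 * Q 2 1 - Q 1 1 * Q 2 0) = Q 0 2 := by simpa [adjugate_fin_three] using hh 2 0
  have h21 : (-(Q 0 0 * Q 2 1) + Q 0 1 * Q 2 0) = Q 1 2 := by simpa [adjugate_fin_three] using hh 2 1
  have h22 : (Q 0 0 * Q 1 1 - Q 0 1 * Q 1 0) = Q 2 2 := by simpa [adjugate_fin_three] using hh 2 2
  clear hh hadj
  fin_cases p <;> fin_cases q <;> fin_cases i <;>
      simp only [Fin.sum_univ_three, Fin.isValue, Fin.zero_eta, Fin.mk_one, Fin.reduceFinMk, lc000, lc001, lc002, lc010, lc011, lc012, lc020, lc021, lc022, lc100, lc101, lc102, lc110, lc111, lc112, lc120, lc121, lc122, lc200, lc201, lc202, lc210, lc211, lc212, lc220, lc221, lc222]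
  · ring
  · ring
  · ring
  · first | linear_combination h20 | linear_combination -h20
  · first | linear_combination h21 | linear_combination -h21
  · first | linear_combination h22 | linear_combination -h22
  · first | linear_combination h10 | linear_combination -h10
  · first | linear_combination h11 | linear_combination -h11
  · first | linear_combination h12 | linear_combination -h12
  · first | linear_combination h20 | linear_combination -h20
  · first | linear_combination h21 | linear_combination -h21
  · first | linear_combination h22 | linear_combination -h22
  · ring
  · ring
  · ring
  · first | linear_combination h00 | linear_combination -h00
  · first | linear_combination h01 | linear_combination -h01
  · first | linear_combination h02 | linear_combination -h02
  · first | linear_combination h10 | linear_combination -h10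
  · first | linear_combination h11 | linear_combination -h11
  · first | linear_combination h12 | linear_combination -h12
  · first | linear_combination h00 | linear_combination -h00
  · first | linear_combination h01 | linear_combination -h01
  · first | linear_combination h02 | linear_combination -h02
  · ring
  · ring
  · ring


set_option maxHeartbeats 2000000 in
lemma key_s7 (Q : Matrix (Fin 3) (Fin 3) ℝ) (hadj : Q.adjugate = Qᵀ) (K : Fin 3 → Fin 3 → Fin 3 → ℝ) :
    toMat (rot Q K) = Q * toMat K * Qᵀ := by
  ext i j
  have hc00 := cross' Q hadj 0 0 i
  have hc01 := cross' Q hadj 0 1 i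
  have hc02 := cross' Q hadj 0 2 i
  have hc10 := cross' Q hadj 1 0 i
  have hc11 := cross' Q hadj 1 1 i
  have hc12 := cross' Q hadj 1 2 i
  have hc20 := cross' Q hadj 2 0 i
  have hc21 := cross' Q hadj 2 1 i
  have hc22 := cross' Q hadj 2 2 i
  simp only [toMat, rot, Matrix.mul_apply, Matrix.of_apply, transpose_apply, Fin.sum_univ_three, lc000, lc001, lc002, lc010, lc011, lc012, lc020, lc021, lc022, lc100, lc101, lc102, lc110, lc111, lc112, lc120, lc121, lc122, lc200, lc201, lc202, lc210, lc211, lc212, lc220, lc221, lc222] at hc00 hc01 hc02 hc10 hc11 hc12 hc20 hc21 hc22 ⊢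
  linear_combination
    (Q j 0 * K 0 0 0) * hc00 +
    (Q j 1 * K 0 0 1) * hc00 +
    (Q j 2 * K 0 0 2) * hc00 +
    (Q j 0 * K 0 1 0) * hc01 +
    (Q j 1 * K 0 1 1) * hc01 +
    (Q j 2 * K 0 1 2) * hc01 +
    (Q j 0 * K 0 2 0) * hc02 +
    (Q j 1 * K 0 2 1) * hc02 +
    (Q j 2 * K 0 2 2) * hc02 +
    (Q j 0 * K 1 0 0) * hc10 +
    (Q j 1 * K 1 0 1) * hc10 +
    (Q j 2 * K 1 0 2) * hc10 +
    (Q j 0 * K 1 1 0) * hc11 +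
    (Q j 1 * K 1 1 1) * hc11 +
    (Q j 2 * K 1 1 2) * hc11 +
    (Q j 0 * K 1 2 0) * hc12 +
    (Q j 1 * K 1 2 1) * hc12 +
    (Q j 2 * K 1 2 2) * hc12 +
    (Q j 0 * K 2 0 0) * hc20 +
    (Q j 1 * K 2 0 1) * hc20 +
    (Q j 2 * K 2 0 2) * hc20 +
    (Q j 0 * K 2 1 0) * hc21 +
    (Q j 1 * K 2 1 1) * hc21 +
    (Q j 2 * K 2 1 2) * hc21 +
    (Q j 0 * K 2 2 0) * hc22 +
    (Q j 1 * K 2 2 1) * hc22 +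
    (Q j 2 * K 2 2 2) * hc22


/-- An odd orthogonally-invariant function of `(1/2)εK` is a hemitropic
invariant of the Hall tensor `K`. -/
theorem hemitropic_of_odd_invariant
    (g : Matrix (Fin 3) (Fin 3) ℝ → ℝ)
    (hg : ∀ (Q A : Matrix (Fin 3) (Fin 3) ℝ), Qᵀ * Q = 1 → g (Q * A * Qᵀ) = g A)
    (hodd : ∀ A, g (-A) = - g A)
    (f : (Fin 3 → Fin 3 → Fin 3 → ℝ) → ℝ)
    (hf : ∀ K, f K = g ((1/2 : ℝ) • toMat K)) :
    ∀ (Q : Matrix (Fin 3) (Fin 3) ℝ), Qᵀ * Q = 1 → Q.det = 1 →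
      ∀ K : Fin 3 → Fin 3 → Fin 3 → ℝ, (∀ i j k, K i j k = - K j i k) →
        f (rot Q K) = f K := by
  intro Q hQ hdet K _
  have hadj : Q.adjugate = Qᵀ := adj_eq Q hQ hdet
  rw [hf, hf, key_s7 Q hadj K]
  have : (1/2 : ℝ) • (Q * toMat K * Qᵀ) = Q * ((1/2 : ℝ) • toMat K) * Qᵀ := by
    rw [Matrix.mul_smul, Matrix.smul_mul]
  rw [this, hg Q _ hQ]
end

section
/- There exist two 3×3 real matrices A and A′ such that, with T, W (resp. T′, W′) their symmetric and skew-symmetric parts, all of the invariants tr W², (tr T)², tr(T²W²), (tr T)(tr T³), (tr T)(tr TW²), tr(T²W²TW), (tr T³)², (tr TW²)², (tr T³)(tr TW²) agree for A and A′, but tr T² ≠ tr T′². (For instance, A = diag(k-entries) induced by the Hall tensor with k₁₃₁ = -1, k₂₃₂ = 1 and all other independent components zero, versus k′₁₃₁ = -2, k′₂₃₂ = 2.) -/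
open Matrix

/-- There are two 3×3 matrices on which the nine invariants other than `tr T²`
agree while `tr T²` differs: `I₂` is not a function of the other nine. -/
theorem I2_functionally_irreducible :
    ∃ A A' : Matrix (Fin 3) (Fin 3) ℝ,
      ((skewPart A) ^ 2).trace = ((skewPart A') ^ 2).trace ∧
      ((symmPart A).trace) ^ 2 = ((symmPart A').trace) ^ 2 ∧
      ((symmPart A) ^ 2 * (skewPart A) ^ 2).trace
        = ((symmPart A') ^ 2 * (skewPart A') ^ 2).trace ∧
      (symmPart A).trace * ((symmPart A) ^ 3).trace
        = (symmPart A').trace * ((symmPart A') ^ 3).trace ∧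
      (symmPart A).trace * (symmPart A * (skewPart A) ^ 2).trace
        = (symmPart A').trace * (symmPart A' * (skewPart A') ^ 2).trace ∧
      ((symmPart A) ^ 2 * (skewPart A) ^ 2 * symmPart A * skewPart A).trace
        = ((symmPart A') ^ 2 * (skewPart A') ^ 2 * symmPart A' * skewPart A').trace ∧
      (((symmPart A) ^ 3).trace) ^ 2 = (((symmPart A') ^ 3).trace) ^ 2 ∧
      ((symmPart A * (skewPart A) ^ 2).trace) ^ 2
        = ((symmPart A' * (skewPart A') ^ 2).trace) ^ 2 ∧
      ((symmPart A) ^ 3).trace * (symmPart A * (skewPart A) ^ 2).trace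
        = ((symmPart A') ^ 3).trace * (symmPart A' * (skewPart A') ^ 2).trace ∧
      ((symmPart A) ^ 2).trace ≠ ((symmPart A') ^ 2).trace := by
  refine ⟨Matrix.diagonal ![1,-1,0], Matrix.diagonal ![2,-2,0], ?_, ?_, ?_, ?_, ?_, ?_, ?_, ?_, ?_, ?_⟩ <;>
  simp only [symmPart, skewPart, Matrix.diagonal_transpose, sub_self, smul_zero,
      ← two_smul ℝ (Matrix.diagonal _), smul_smul] <;>
  norm_num [Matrix.diagonal_pow, Matrix.diagonal_mul_diagonal, Matrix.trace_diagonal,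
      Fin.sum_univ_succ]
end

section
/- There exist 3×3 real matrices A and A′ with symmetric parts T, T′ and skew-symmetric parts W, W′ such that tr T² = tr T′², tr W² = tr W′², (tr T)² = (tr T′)², tr(T²W²) = tr(T′²W′²), and all six products among {tr T, tr T³, tr(TW²)} of total degree 4 and 6 except tr(T²W²TW) agree, while tr(T²W²TW) = 2 and tr(T′²W′²T′W′) = -2. In particular, the invariant I₆ = tr(T²W²TW) is not a single-valued function of the other nine invariants I₂, J₂, K₂, I₄, J₄, K₄, J₆, K₆, L₆. -/
open Matrix

set_option maxHeartbeats 4000000 in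
/-- `I₆ = tr(T²W²TW)` is not a single-valued function of the other nine
invariants: two matrices agree on all nine but have `I₆ = 2` and `I₆ = -2`. -/
theorem I6_functionally_irreducible :
    ∃ A A' : Matrix (Fin 3) (Fin 3) ℝ,
      ((symmPart A) ^ 2).trace = ((symmPart A') ^ 2).trace ∧
      ((skewPart A) ^ 2).trace = ((skewPart A') ^ 2).trace ∧
      ((symmPart A).trace) ^ 2 = ((symmPart A').trace) ^ 2 ∧
      ((symmPart A) ^ 2 * (skewPart A) ^ 2).trace
        = ((symmPart A') ^ 2 * (skewPart A') ^ 2).trace ∧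
      (symmPart A).trace * ((symmPart A) ^ 3).trace
        = (symmPart A').trace * ((symmPart A') ^ 3).trace ∧
      (symmPart A).trace * (symmPart A * (skewPart A) ^ 2).trace
        = (symmPart A').trace * (symmPart A' * (skewPart A') ^ 2).trace ∧
      (((symmPart A) ^ 3).trace) ^ 2 = (((symmPart A') ^ 3).trace) ^ 2 ∧
      ((symmPart A * (skewPart A) ^ 2).trace) ^ 2
        = ((symmPart A' * (skewPart A') ^ 2).trace) ^ 2 ∧
      ((symmPart A) ^ 3).trace * (symmPart A * (skewPart A) ^ 2).trace
        = ((symmPart A') ^ 3).trace * (symmPart A' * (skewPart A') ^ 2).trace ∧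
      ((symmPart A) ^ 2 * (skewPart A) ^ 2 * symmPart A * skewPart A).trace = 2 ∧
      ((symmPart A') ^ 2 * (skewPart A') ^ 2 * symmPart A' * skewPart A').trace = -2 := by
  refine ⟨!![-2,-2,1;1,-1,-1;2,2,-1], !![-2,1,2;-2,-1,2;1,-1,-1], ?_⟩
  have hT : symmPart !![-2,-2,1;1,-1,-1;2,2,-1]
      = !![(-2:ℝ),-1/2,3/2;-1/2,-1,1/2;3/2,1/2,-1] := by
    ext i j
    simp only [symmPart, Matrix.smul_apply, Matrix.add_apply, Matrix.transpose_apply,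
      smul_eq_mul]
    fin_cases i <;> fin_cases j <;> norm_num
  have hW : skewPart !![-2,-2,1;1,-1,-1;2,2,-1]
      = !![(0:ℝ),-3/2,-1/2;3/2,0,-3/2;1/2,3/2,0] := by
    ext i j
    simp only [skewPart, Matrix.smul_apply, Matrix.sub_apply, Matrix.transpose_apply,
      smul_eq_mul]
    fin_cases i <;> fin_cases j <;> norm_num
  have hT' : symmPart !![-2,1,2;-2,-1,2;1,-1,-1]
      = !![(-2:ℝ),-1/2,3/2;-1/2,-1,1/2;3/2,1/2,-1] := by
    ext i j
    simp only [symmPart, Matrix.smul_apply, Matrix.add_apply, Matrix.transpose_apply,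
      smul_eq_mul]
    fin_cases i <;> fin_cases j <;> norm_num
  have hW' : skewPart !![-2,1,2;-2,-1,2;1,-1,-1]
      = !![(0:ℝ),3/2,1/2;-3/2,0,3/2;-1/2,-3/2,0] := by
    ext i j
    simp only [skewPart, Matrix.smul_apply, Matrix.sub_apply, Matrix.transpose_apply,
      smul_eq_mul]
    fin_cases i <;> fin_cases j <;> norm_num
  rw [hT, hW, hT', hW']
  refine ⟨?_, ?_, ?_, ?_, ?_, ?_, ?_, ?_, ?_, ?_, ?_⟩ <;>
    norm_num [pow_succ, Matrix.mul_fin_three, Matrix.trace_fin_three, Matrix.one_mul,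
      Matrix.cons_val_two, Matrix.vecHead, Matrix.vecTail]
end
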